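/- For every real x and every t ≠ 0, the Dunkl–Appell polynomials satisfy Σ_{i=2}^∞ (q_i(x)/γ_μ(i)) (i + 2μθ_i)(i − 1 + 2μθ_{i−1}) t^{i−2} = x² Q(t) e_μ(xt) + x Q'(t)(e_μ(xt) − e_μ(−xt)) + e_μ(xt)(Λ_μ² Q)(t) + (e_μ(−xt) − e_μ(xt))(Λ_μ Q)'(t) + x(e_μ(xt) + e_μ(−xt)) Q'(t) + (e_μ(−xt) − e_μ(xt))(Λ_μ Q')(t) + 2(e_μ(xt) − e_μ(−xt)) Q''(t), where θ_i = 0 for even i and θ_i = 1 for odd i, and Λ_μ² denotes the Dunkl operator applied twice. -/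

import Mathlib

open scoped BigOperators

/-- The Dunkl coefficients γ_μ(i). -/
noncomputable def gammaMu (μ : ℝ) (i : ℕ) : ℝ :=
  if Even i then
    2 ^ i * (Nat.factorial (i / 2)) *
      Real.Gamma (((i / 2 : ℕ) : ℝ) + μ + 1 / 2) / Real.Gamma (μ + 1 / 2)
  else
    2 ^ i * (Nat.factorial (i / 2)) *
      Real.Gamma (((i / 2 : ℕ) : ℝ) + μ + 3 / 2) / Real.Gamma (μ + 1 / 2)

/-- θ_i = 0 if i is even, 1 if i is odd. -/
noncomputable def thetaFn (i : ℕ) : ℝ := if Even i then 0 else 1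

/-- The Dunkl exponential e_μ(x) = Σ x^i / γ_μ(i). -/
noncomputable def dunklExp (μ : ℝ) (x : ℝ) : ℝ := ∑' i : ℕ, x ^ i / gammaMu μ i

/-- The Dunkl operator (Λ_μ f)(x) = f'(x) + μ (f(x) - f(-x)) / x. -/
noncomputable def dunklOp (μ : ℝ) (f : ℝ → ℝ) (x : ℝ) : ℝ :=
  deriv f x + μ * (f x - f (-x)) / x

/-- Q(t) = Σ c_i t^i / γ_μ(i). -/
noncomputable def Qf (μ : ℝ) (c : ℕ → ℝ) (t : ℝ) : ℝ := ∑' i : ℕ, c i * t ^ i / gammaMu μ i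

/-- The Dunkl–Appell polynomials q_i(x) = Σ_{j=0}^i (γ_μ(i)/(γ_μ(j)γ_μ(i-j))) c_{i-j} x^j. -/
noncomputable def qPoly (μ : ℝ) (c : ℕ → ℝ) (i : ℕ) (x : ℝ) : ℝ :=
  ∑ j ∈ Finset.range (i + 1),
    gammaMu μ i / (gammaMu μ j * gammaMu μ (i - j)) * c (i - j) * x ^ j

/-- The operators K_n^μ(f;x). -/
noncomputable def Kop (μ : ℝ) (c : ℕ → ℝ) (n : ℕ) (f : ℝ → ℝ) (x : ℝ) : ℝ :=
  1 / (Qf μ c 1 * dunklExp μ (n * x)) *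
    ∑' i : ℕ, qPoly μ c i (n * x) / gammaMu μ i * f (((i : ℝ) + 2 * μ * thetaFn i) / n)

/-- Power series from coefficients. -/
noncomputable def Sf (a : ℕ → ℝ) (t : ℝ) : ℝ := ∑' i : ℕ, a i * t ^ i

/-- Everywhere absolutely summable coefficient sequence. -/
def Sable (a : ℕ → ℝ) : Prop := ∀ r : ℝ, Summable fun i : ℕ => ‖a i * r ^ i‖

/-- Coefficients of the derivative. -/
noncomputable def Dc (a : ℕ → ℝ) (i : ℕ) : ℝ := a (i + 1) * ((i : ℝ) + 1)

/-- Coefficients after applying the Dunkl operator. -/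
noncomputable def Lcc (μ : ℝ) (a : ℕ → ℝ) (i : ℕ) : ℝ :=
  a (i + 1) * (((i : ℝ) + 1) + 2 * μ * thetaFn (i + 1))

/-- Cauchy product coefficients. -/
noncomputable def Cc (a b : ℕ → ℝ) (i : ℕ) : ℝ :=
  ∑ j ∈ Finset.range (i + 1), a j * b (i - j)

lemma Sable.summable {a : ℕ → ℝ} (h : Sable a) (t : ℝ) :
    Summable fun i : ℕ => a i * t ^ i := (h t).of_norm

lemma sable_of_le {a b : ℕ → ℝ} {C : ℝ} (h : Sable b) (hle : ∀ i, |a i| ≤ C * |b i|) :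
    Sable a := by
  intro r
  refine Summable.of_nonneg_of_le (fun i => norm_nonneg _) (fun i => ?_) ((h r).mul_left C)
  rw [Real.norm_eq_abs, abs_mul, Real.norm_eq_abs, abs_mul, ← mul_assoc]
  exact mul_le_mul_of_nonneg_right (hle i) (abs_nonneg _)

lemma Sable.shift_mul {a : ℕ → ℝ} (h : Sable a) {u : ℕ → ℝ} {C : ℝ}
    (hu : ∀ i, |u i| ≤ C * ((i : ℝ) + 1)) :
    Sable (fun i => a (i + 1) * u i) := by
  intro r
  set R : ℝ := |r| + 1 with hRdef
  have hR1 : (1 : ℝ) ≤ R := by rw [hRdef]; linarith [abs_nonneg r]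
  have hrR : |r| ≤ R := by rw [hRdef]; linarith
  have hC : 0 ≤ C := by
    have := hu 0
    nlinarith [abs_nonneg (u 0)]
  have hsum : Summable fun i : ℕ => C * ‖a (i + 1) * (2 * R) ^ (i + 1)‖ := by
    have h2 : Summable fun i : ℕ => ‖a i * (2 * R) ^ i‖ := h (2 * R)
    exact (h2.comp_injective (add_left_injective 1)).mul_left C
  refine Summable.of_nonneg_of_le (fun i => norm_nonneg _) (fun i => ?_) hsum
  have hkey : ((i : ℝ) + 1) * R ^ i ≤ (2 * R) ^ (i + 1) := by
    have h1 : ((i : ℝ) + 1) ≤ 2 ^ (i + 1) := by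
      exact_mod_cast (Nat.lt_two_pow_self (n := i + 1)).le
    have h2 : R ^ i ≤ R ^ (i + 1) := pow_le_pow_right₀ hR1 (Nat.le_succ i)
    calc ((i : ℝ) + 1) * R ^ i ≤ 2 ^ (i + 1) * R ^ (i + 1) := by
          apply mul_le_mul h1 h2 (pow_nonneg (by linarith) i) (by positivity)
      _ = (2 * R) ^ (i + 1) := (mul_pow 2 R (i + 1)).symm
  have hRpos : (0 : ℝ) < R := by linarith
  calc ‖a (i + 1) * u i * r ^ i‖ = |a (i + 1)| * |u i| * |r| ^ i := by
        rw [Real.norm_eq_abs, abs_mul, abs_mul, abs_pow]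
    _ ≤ |a (i + 1)| * (C * ((i : ℝ) + 1)) * R ^ i := by
        apply mul_le_mul
        · exact mul_le_mul_of_nonneg_left (hu i) (abs_nonneg _)
        · exact pow_le_pow_left₀ (abs_nonneg r) hrR i
        · positivity
        · positivity
    _ = C * (|a (i + 1)| * (((i : ℝ) + 1) * R ^ i)) := by ring
    _ ≤ C * (|a (i + 1)| * (2 * R) ^ (i + 1)) := by
        apply mul_le_mul_of_nonneg_left _ hC
        exact mul_le_mul_of_nonneg_left hkey (abs_nonneg _)
    _ = C * ‖a (i + 1) * (2 * R) ^ (i + 1)‖ := by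
        rw [Real.norm_eq_abs, abs_mul, abs_of_pos (by positivity : (0:ℝ) < (2*R)^(i+1))]

lemma thetaFn_cases (i : ℕ) : thetaFn i = 0 ∨ thetaFn i = 1 := by
  unfold thetaFn; split <;> simp

lemma thetaFn_nonneg (i : ℕ) : 0 ≤ thetaFn i := by
  rcases thetaFn_cases i with h | h <;> rw [h] <;> norm_num

lemma thetaFn_le_one (i : ℕ) : thetaFn i ≤ 1 := by
  rcases thetaFn_cases i with h | h <;> rw [h] <;> norm_num

lemma Sable.D {a : ℕ → ℝ} (h : Sable a) : Sable (Dc a) := by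
  have := h.shift_mul (u := fun i => (i : ℝ) + 1) (C := 1) (fun i => by
    rw [abs_of_nonneg (by positivity : (0:ℝ) ≤ (i:ℝ)+1)]; simp)
  exact this

lemma Sable.L {a : ℕ → ℝ} (h : Sable a) (μ : ℝ) : Sable (Lcc μ a) := by
  have := h.shift_mul (u := fun i => ((i : ℝ) + 1) + 2 * μ * thetaFn (i + 1))
      (C := 1 + 2 * |μ|) (fun i => by
    have h1 : (0:ℝ) ≤ (i : ℝ) + 1 := by positivity
    have h2 : |2 * μ * thetaFn (i + 1)| ≤ 2 * |μ| := by
      rw [abs_mul, abs_mul, abs_two, abs_of_nonneg (thetaFn_nonneg _)]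
      nlinarith [thetaFn_le_one (i + 1), thetaFn_nonneg (i + 1), abs_nonneg μ]
    calc |((i : ℝ) + 1) + 2 * μ * thetaFn (i + 1)|
        ≤ |((i : ℝ) + 1)| + |2 * μ * thetaFn (i + 1)| := abs_add_le _ _
      _ ≤ ((i : ℝ) + 1) + 2 * |μ| := by rw [abs_of_nonneg h1]; linarith
      _ ≤ (1 + 2 * |μ|) * ((i : ℝ) + 1) := by nlinarith [abs_nonneg μ])
  exact this

lemma Sable.hasDerivAt {a : ℕ → ℝ} (h : Sable a) (t : ℝ) :
    HasDerivAt (Sf a) (Sf (Dc a) t) t := by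
  set R : ℝ := |t| + 1 with hRdef
  have hR1 : (1 : ℝ) ≤ R := by rw [hRdef]; linarith [abs_nonneg t]
  have hRpos : (0 : ℝ) < R := by linarith
  have htR : t ∈ Metric.ball (0 : ℝ) R := by
    rw [Metric.mem_ball, Real.dist_eq, sub_zero, hRdef]; linarith
  set u : ℕ → ℝ := fun n => |a n| * ((n : ℝ) * R ^ (n - 1)) with hudef
  have hu : Summable u := by
    rw [← (summable_nat_add_iff 1)]
    refine ((h.D) R).congr fun m => ?_
    rw [hudef]
    simp only [Nat.add_sub_cancel, Dc]
    rw [Real.norm_eq_abs, abs_mul, abs_mul, abs_pow, abs_of_pos hRpos,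
      abs_of_nonneg (by positivity : (0:ℝ) ≤ (m:ℝ)+1)]
    push_cast
    ring
  have H := hasDerivAt_tsum_of_isPreconnected hu (Metric.isOpen_ball)
      (convex_ball (0:ℝ) R).isPreconnected
      (g := fun n s => a n * s ^ n) (g' := fun n y => a n * ((n : ℝ) * y ^ (n - 1)))
      (fun n y _ => (hasDerivAt_pow n y).const_mul (a n))
      (fun n y hy => ?_) (Metric.mem_ball_self hRpos) (h.summable 0) htR
  · have hval : (∑' n : ℕ, a n * ((n : ℝ) * t ^ (n - 1))) = Sf (Dc a) t := by
      have hs : Summable (fun n : ℕ => a n * ((n : ℝ) * t ^ (n - 1))) := by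
        rw [← (summable_nat_add_iff 1)]
        refine ((h.D).summable t).congr fun m => ?_
        simp only [Nat.add_sub_cancel, Dc]
        push_cast
        ring
      rw [Summable.tsum_eq_zero_add hs]
      simp only [Nat.cast_zero, zero_mul, mul_zero, zero_add]
      refine tsum_congr fun m => ?_
      simp only [Nat.add_sub_cancel, Dc]
      push_cast
      ring
    rw [hval] at H
    exact H
  · have hyR : |y| ≤ R := by
      rw [Metric.mem_ball, Real.dist_eq, sub_zero] at hy
      linarith
    rw [Real.norm_eq_abs, abs_mul, abs_mul, abs_pow, hudef]
    apply mul_le_mul_of_nonneg_left _ (abs_nonneg _)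
    rw [abs_of_nonneg (by positivity : (0:ℝ) ≤ (n:ℝ))]
    exact mul_le_mul_of_nonneg_left (pow_le_pow_left₀ (abs_nonneg y) hyR _) (by positivity)

lemma gammaMu_pos {μ : ℝ} (hμ : μ + 1 / 2 > 0) (i : ℕ) : 0 < gammaMu μ i := by
  have hb : (0:ℝ) < Real.Gamma (μ + 1 / 2) := Real.Gamma_pos_of_pos hμ
  have hc : (0:ℝ) ≤ ((i / 2 : ℕ) : ℝ) := Nat.cast_nonneg _
  unfold gammaMu
  split
  · apply div_pos _ hb
    apply mul_pos (by positivity)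
    apply Real.Gamma_pos_of_pos; linarith
  · apply div_pos _ hb
    apply mul_pos (by positivity)
    apply Real.Gamma_pos_of_pos; linarith

lemma gammaMu_succ {μ : ℝ} (hμ : μ + 1 / 2 > 0) (i : ℕ) :
    gammaMu μ (i + 1) = gammaMu μ i * (((i : ℝ) + 1) + 2 * μ * thetaFn (i + 1)) := by
  have hΓμ : Real.Gamma (μ + 1 / 2) ≠ 0 := (Real.Gamma_pos_of_pos hμ).ne'
  rcases Nat.even_or_odd i with he | ho
  · obtain ⟨m, rfl⟩ := he
    have h1 : ¬ Even (m + m + 1) := by rintro ⟨k, hk⟩; omega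
    have h2 : (m + m + 1) / 2 = m := by omega
    have h3 : (m + m) / 2 = m := by omega
    have hth : thetaFn (m + m + 1) = 1 := by rw [thetaFn, if_neg h1]
    rw [gammaMu, gammaMu, if_neg h1, if_pos ⟨m, rfl⟩, h2, h3, hth]
    have hpos : (0:ℝ) < (m : ℝ) + μ + 1 / 2 := by
      have : (0:ℝ) ≤ (m : ℝ) := Nat.cast_nonneg m
      linarith
    have hg : Real.Gamma ((m:ℝ) + μ + 3 / 2) = ((m:ℝ) + μ + 1/2) * Real.Gamma ((m:ℝ) + μ + 1 / 2) := by
      rw [show (m:ℝ) + μ + 3 / 2 = ((m:ℝ) + μ + 1/2) + 1 by ring, Real.Gamma_add_one hpos.ne']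
    rw [hg, pow_succ]
    field_simp
    push_cast
    ring
  · obtain ⟨m, rfl⟩ := ho
    have h1 : Even (2 * m + 1 + 1) := ⟨m + 1, by omega⟩
    have h2 : (2 * m + 1 + 1) / 2 = m + 1 := by omega
    have h3 : (2 * m + 1) / 2 = m := by omega
    have hth : thetaFn (2 * m + 1 + 1) = 0 := by rw [thetaFn, if_pos h1]
    have hodd : ¬ Even (2 * m + 1) := by rintro ⟨k, hk⟩; omega
    rw [gammaMu, gammaMu, if_pos h1, if_neg hodd, h2, h3, hth]
    have harg : ((m + 1 : ℕ) : ℝ) + μ + 1 / 2 = (m:ℝ) + μ + 3 / 2 := by push_cast; ring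
    rw [harg, pow_succ, Nat.factorial_succ]
    field_simp
    push_cast
    ring

lemma gfac_pos {μ : ℝ} (hμ : μ + 1 / 2 > 0) (i : ℕ) :
    0 < ((i : ℝ) + 1) + 2 * μ * thetaFn (i + 1) := by
  have h := gammaMu_pos hμ (i + 1)
  rw [gammaMu_succ hμ i] at h
  nlinarith [gammaMu_pos hμ i]

lemma dunklOp_Sf (μ : ℝ) {a : ℕ → ℝ} (ha : Sable a) {s : ℝ} (hs : s ≠ 0) :
    dunklOp μ (Sf a) s = Sf (Lcc μ a) s := by
  have h1 : Sable (fun i => a i * (2 * thetaFn i)) :=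
    sable_of_le (C := 2) ha (fun i => by
      rw [abs_mul, abs_mul, abs_two, abs_of_nonneg (thetaFn_nonneg i)]
      nlinarith [thetaFn_le_one i, thetaFn_nonneg i, abs_nonneg (a i)])
  have h2 : Sable (fun i => a (i + 1) * (2 * thetaFn (i + 1))) :=
    ha.shift_mul (C := 2) (fun i => by
      rw [abs_mul, abs_two, abs_of_nonneg (thetaFn_nonneg (i+1))]
      nlinarith [thetaFn_le_one (i + 1), thetaFn_nonneg (i + 1), Nat.cast_nonneg (α := ℝ) i])
  have key : Sf a s - Sf a (-s) = (∑' i : ℕ, a (i + 1) * (2 * thetaFn (i + 1)) * s ^ i) * s := by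
    have e1 : Sf a s - Sf a (-s) = ∑' i : ℕ, (a i * (2 * thetaFn i)) * s ^ i := by
      rw [Sf, Sf, ← Summable.tsum_sub (ha.summable s) (ha.summable (-s))]
      refine tsum_congr fun i => ?_
      rcases Nat.even_or_odd i with he | ho
      · rw [he.neg_pow, thetaFn, if_pos he]; ring
      · rw [ho.neg_pow, thetaFn, if_neg (Nat.not_even_iff_odd.mpr ho)]; ring
    rw [e1, Summable.tsum_eq_zero_add (h1.summable s)]
    have h0 : a 0 * (2 * thetaFn 0) * s ^ 0 = 0 := by
      rw [thetaFn, if_pos Even.zero]; ring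
    rw [h0, zero_add, ← tsum_mul_right]
    exact tsum_congr fun i => by rw [pow_succ]; ring
  have hunf : dunklOp μ (Sf a) s = deriv (Sf a) s + μ * (Sf a s - Sf a (-s)) / s := rfl
  rw [hunf, (ha.hasDerivAt s).deriv, key, mul_div_assoc, mul_div_cancel_right₀ _ hs,
    ← tsum_mul_left, Sf, Sf, ← Summable.tsum_add ((ha.D).summable s) ((h2.summable s).mul_left μ)]
  exact tsum_congr fun i => by simp only [Dc, Lcc]; ring

lemma Sf_Lcc_eq (μ : ℝ) {a : ℕ → ℝ} (ha : Sable a) {s : ℝ} (hs : s ≠ 0) :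
    Sf (Lcc μ a) s = Sf (Dc a) s + μ * (Sf a s - Sf a (-s)) / s := by
  rw [← dunklOp_Sf μ ha hs]
  have hunf : dunklOp μ (Sf a) s = deriv (Sf a) s + μ * (Sf a s - Sf a (-s)) / s := rfl
  rw [hunf, (ha.hasDerivAt s).deriv]

lemma sable_exp {μ : ℝ} (hμ : μ + 1 / 2 > 0) (x : ℝ) :
    Sable (fun i => x ^ i / gammaMu μ i) := by
  intro r
  set y : ℝ := x * r with hydef
  have hterm : ∀ i : ℕ, ‖(x ^ i / gammaMu μ i * r ^ i : ℝ)‖ = |y| ^ i / gammaMu μ i := by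
    intro i
    rw [Real.norm_eq_abs, abs_mul, abs_div, abs_pow, abs_pow,
      abs_of_pos (gammaMu_pos hμ i), div_mul_eq_mul_div, ← mul_pow, ← abs_mul, ← abs_pow, abs_pow]
  obtain ⟨N, hN⟩ := exists_nat_ge (2 * |y|)
  apply summable_of_ratio_norm_eventually_le (r := 1 / 2) (by norm_num)
  filter_upwards [Filter.eventually_ge_atTop N] with i hi
  have hiN : (2 : ℝ) * |y| ≤ (i : ℝ) := le_trans hN (by exact_mod_cast hi)
  rw [norm_norm, norm_norm, hterm, hterm]
  set g : ℝ := ((i : ℝ) + 1) + 2 * μ * thetaFn (i + 1) with hgdef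
  have hgpos : 0 < g := gfac_pos hμ i
  have hgi : (i : ℝ) ≤ g := by
    rcases thetaFn_cases (i + 1) with h | h <;> rw [hgdef, h] <;> nlinarith
  have h2y : 2 * |y| ≤ g := le_trans hiN hgi
  have hγ : 0 < gammaMu μ i := gammaMu_pos hμ i
  rw [gammaMu_succ hμ i, ← hgdef, pow_succ]
  rw [div_le_iff₀ (by positivity : (0:ℝ) < gammaMu μ i * g)]
  have hre : 1 / 2 * (|y| ^ i / gammaMu μ i) * (gammaMu μ i * g) = |y| ^ i * (g / 2) := by
    field_simp
  rw [hre]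
  have hp : (0:ℝ) ≤ |y| ^ i := by positivity
  exact mul_le_mul_of_nonneg_left (by linarith) hp

lemma Cc_mul_pow (u v : ℕ → ℝ) (n : ℕ) (s : ℝ) :
    ∑ k ∈ Finset.range (n + 1), (u k * s ^ k) * (v (n - k) * s ^ (n - k)) = Cc u v n * s ^ n := by
  rw [Cc, Finset.sum_mul]
  refine Finset.sum_congr rfl fun k hk => ?_
  have hk' : k ≤ n := Nat.lt_succ_iff.mp (Finset.mem_range.mp hk)
  have hpow : s ^ k * s ^ (n - k) = s ^ n := by
    rw [← pow_add, Nat.add_sub_cancel' hk']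
  calc (u k * s ^ k) * (v (n - k) * s ^ (n - k)) = u k * v (n - k) * (s ^ k * s ^ (n - k)) := by ring
    _ = u k * v (n - k) * s ^ n := by rw [hpow]

lemma Sf_mul {u v : ℕ → ℝ} (hu : Sable u) (hv : Sable v) (s : ℝ) :
    Sf u s * Sf v s = Sf (Cc u v) s := by
  rw [Sf, Sf, Sf, tsum_mul_tsum_eq_tsum_sum_range_of_summable_norm (hu s) (hv s)]
  exact tsum_congr fun n => Cc_mul_pow u v n s

lemma Sable.cauchy {u v : ℕ → ℝ} (hu : Sable u) (hv : Sable v) : Sable (Cc u v) := by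
  intro r
  refine (summable_norm_sum_mul_range_of_summable_norm (hu r) (hv r)).congr fun n => ?_
  rw [Cc_mul_pow u v n r]

lemma Qf_eq_Sf (μ : ℝ) (c : ℕ → ℝ) : Qf μ c = Sf (fun i => c i / gammaMu μ i) := by
  funext s
  exact tsum_congr fun i => mul_div_right_comm (c i) (s ^ i) (gammaMu μ i)

lemma dunklExp_eq_Sf (μ x : ℝ) (s : ℝ) :
    dunklExp μ (x * s) = Sf (fun i => x ^ i / gammaMu μ i) s := by
  refine tsum_congr fun i => ?_
  rw [mul_pow, mul_div_right_comm]

lemma q_div {μ : ℝ} (hμ : μ + 1 / 2 > 0) (c : ℕ → ℝ) (x : ℝ) (m : ℕ) :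
    qPoly μ c m x / gammaMu μ m =
      Cc (fun i => x ^ i / gammaMu μ i) (fun i => c i / gammaMu μ i) m := by
  rw [qPoly, Cc, Finset.sum_div]
  refine Finset.sum_congr rfl fun j hj => ?_
  have h1 := (gammaMu_pos hμ m).ne'
  have h2 := (gammaMu_pos hμ j).ne'
  have h3 := (gammaMu_pos hμ (m - j)).ne'
  field_simp

lemma Lcc_exp {μ : ℝ} (hμ : μ + 1 / 2 > 0) (x : ℝ) (s : ℝ) :
    Sf (Lcc μ (fun i => x ^ i / gammaMu μ i)) s = x * Sf (fun i => x ^ i / gammaMu μ i) s := by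
  rw [Sf, Sf, ← tsum_mul_left]
  refine tsum_congr fun i => ?_
  have hg := gfac_pos hμ i
  rw [Lcc]
  rw [gammaMu_succ hμ i, div_mul_eq_div_div]
  rw [div_mul_cancel₀ _ hg.ne']
  rw [pow_succ]
  field_simp

lemma hasDerivAt_Sf_neg {u : ℕ → ℝ} (hu : Sable u) (s : ℝ) :
    HasDerivAt (fun z => Sf u (-z)) (-(Sf (Dc u) (-s))) s := by
  have h := (hu.hasDerivAt (-s)).comp s (hasDerivAt_neg' s)
  rw [mul_neg_one] at h
  exact h

/-- second derived identity for Dunkl–Appell polynomials. -/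
theorem dunklAppell_second_identity (μ : ℝ) (hμ : μ + 1 / 2 > 0) (c : ℕ → ℝ) (hc0 : c 0 ≠ 0)
    (hQ : ∀ t : ℝ, Summable fun i : ℕ => |c i * t ^ i / gammaMu μ i|)
    (x t : ℝ) (ht : t ≠ 0) :
    ∑' i : ℕ, qPoly μ c (i + 2) x / gammaMu μ (i + 2) *
        (((i : ℝ) + 2) + 2 * μ * thetaFn (i + 2)) *
        (((i : ℝ) + 1) + 2 * μ * thetaFn (i + 1)) * t ^ i =
      x ^ 2 * Qf μ c t * dunklExp μ (x * t) +
        x * deriv (Qf μ c) t * (dunklExp μ (x * t) - dunklExp μ (-(x * t))) +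
        dunklExp μ (x * t) * dunklOp μ (dunklOp μ (Qf μ c)) t +
        (dunklExp μ (-(x * t)) - dunklExp μ (x * t)) * deriv (dunklOp μ (Qf μ c)) t +
        x * (dunklExp μ (x * t) + dunklExp μ (-(x * t))) * deriv (Qf μ c) t +
        (dunklExp μ (-(x * t)) - dunklExp μ (x * t)) * dunklOp μ (deriv (Qf μ c)) t +
        2 * (dunklExp μ (x * t) - dunklExp μ (-(x * t))) * deriv (deriv (Qf μ c)) t := by
  have hmt : (-t) ≠ 0 := neg_ne_zero.mpr ht
  have hEmt : dunklExp μ (-(x * t)) = Sf (fun i => x ^ i / gammaMu μ i) (-t) := by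
    rw [show -(x * t) = x * (-t) by ring, dunklExp_eq_Sf μ x (-t)]
  rw [Qf_eq_Sf μ c, dunklExp_eq_Sf μ x t, hEmt]
  set b : ℕ → ℝ := fun i => c i / gammaMu μ i with hbdef
  set e : ℕ → ℝ := fun i => x ^ i / gammaMu μ i with hedef
  have hb : Sable b := by
    intro r
    refine (hQ r).congr fun i => ?_
    show |c i * r ^ i / gammaMu μ i| = ‖c i / gammaMu μ i * r ^ i‖
    rw [Real.norm_eq_abs, mul_div_right_comm]
  have he : Sable e := by rw [hedef]; exact sable_exp hμ x
  have hderb : deriv (Sf b) = Sf (Dc b) := funext fun s => (hb.hasDerivAt s).deriv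
  rw [hderb]
  have hderb2 : deriv (Sf (Dc b)) = Sf (Dc (Dc b)) := funext fun s => (hb.D.hasDerivAt s).deriv
  rw [hderb2]
  have hderiv_congr : ∀ {g₁ g₂ : ℝ → ℝ}, (∀ s : ℝ, s ≠ 0 → g₁ s = g₂ s) →
      deriv g₁ t = deriv g₂ t := by
    intro g₁ g₂ hgg
    apply Filter.EventuallyEq.deriv_eq
    filter_upwards [compl_singleton_mem_nhds ht] with s hs
    exact hgg s hs
  have e4 : deriv (dunklOp μ (Sf b)) t = Sf (Dc (Lcc μ b)) t := by
    rw [hderiv_congr (fun s hs => dunklOp_Sf μ hb hs)]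
    exact ((hb.L μ).hasDerivAt t).deriv
  have e5 : dunklOp μ (dunklOp μ (Sf b)) t = Sf (Lcc μ (Lcc μ b)) t := by
    have hunf : dunklOp μ (dunklOp μ (Sf b)) t =
        deriv (dunklOp μ (Sf b)) t + μ * (dunklOp μ (Sf b) t - dunklOp μ (Sf b) (-t)) / t := rfl
    rw [hunf, e4, dunklOp_Sf μ hb ht, dunklOp_Sf μ hb hmt, Sf_Lcc_eq μ (hb.L μ) ht]
  have e3 : dunklOp μ (Sf (Dc b)) t = Sf (Lcc μ (Dc b)) t := dunklOp_Sf μ hb.D ht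
  rw [e5, e4, e3]
  -- left-hand side
  have hA : Sable (Cc e b) := he.cauchy hb
  have hAa : ∀ s : ℝ, Sf e s * Sf b s = Sf (Cc e b) s := Sf_mul he hb
  have hq : ∀ m, qPoly μ c m x / gammaMu μ m = Cc e b m := by
    intro m; rw [hedef, hbdef]; exact q_div hμ c x m
  have hLHS : (∑' i : ℕ, qPoly μ c (i + 2) x / gammaMu μ (i + 2) *
        (((i : ℝ) + 2) + 2 * μ * thetaFn (i + 2)) *
        (((i : ℝ) + 1) + 2 * μ * thetaFn (i + 1)) * t ^ i) = Sf (Lcc μ (Lcc μ (Cc e b))) t := by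
    refine tsum_congr fun i => ?_
    rw [hq (i + 2)]
    simp only [Lcc, show i + 1 + 1 = i + 2 from rfl]
    push_cast
    ring
  rw [hLHS]
  have l1 : Sf (Lcc μ (Lcc μ (Cc e b))) t = Sf (Dc (Lcc μ (Cc e b))) t +
      μ * (Sf (Lcc μ (Cc e b)) t - Sf (Lcc μ (Cc e b)) (-t)) / t := Sf_Lcc_eq μ (hA.L μ) ht
  have hDa : ∀ s : ℝ, Sf (Dc (Cc e b)) s = Sf (Dc e) s * Sf b s + Sf e s * Sf (Dc b) s := by
    intro s
    have h1 : deriv (Sf (Cc e b)) s = Sf (Dc (Cc e b)) s := (hA.hasDerivAt s).deriv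
    rw [← h1]
    have hfun : Sf (Cc e b) = fun z => Sf e z * Sf b z := funext fun z => (hAa z).symm
    rw [hfun]
    exact ((he.hasDerivAt s).mul (hb.hasDerivAt s)).deriv
  have hφeq : ∀ s : ℝ, s ≠ 0 → Sf (Lcc μ (Cc e b)) s =
      (Sf (Dc e) s * Sf b s + Sf e s * Sf (Dc b) s) +
        μ * (Sf e s * Sf b s - Sf e (-s) * Sf b (-s)) / s := by
    intro s hs
    rw [Sf_Lcc_eq μ hA hs, hDa s, ← hAa s, ← hAa (-s)]
  have l2 := hφeq t ht
  have l3 := hφeq (-t) hmt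
  rw [neg_neg] at l3
  have hφd : HasDerivAt (fun s : ℝ => (Sf (Dc e) s * Sf b s + Sf e s * Sf (Dc b) s) +
      μ * (Sf e s * Sf b s - Sf e (-s) * Sf b (-s)) / s)
      ((Sf (Dc (Dc e)) t * Sf b t + Sf (Dc e) t * Sf (Dc b) t +
        (Sf (Dc e) t * Sf (Dc b) t + Sf e t * Sf (Dc (Dc b)) t)) +
       μ * ((Sf (Dc e) t * Sf b t + Sf e t * Sf (Dc b) t + Sf (Dc e) (-t) * Sf b (-t) +
        Sf e (-t) * Sf (Dc b) (-t)) * t - (Sf e t * Sf b t - Sf e (-t) * Sf b (-t))) / t ^ 2) t := by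
    have H := (((he.D.hasDerivAt t).mul (hb.hasDerivAt t)).add
        ((he.hasDerivAt t).mul (hb.D.hasDerivAt t))).add
      (((((he.hasDerivAt t).mul (hb.hasDerivAt t)).sub
        ((hasDerivAt_Sf_neg he t).mul (hasDerivAt_Sf_neg hb t))).const_mul μ).div
        (hasDerivAt_id t) ht)
    refine H.congr_deriv ?_
    simp only [id, Pi.mul_apply, Pi.sub_apply]
    ring
  have l4 : Sf (Dc (Lcc μ (Cc e b))) t =
      (Sf (Dc (Dc e)) t * Sf b t + Sf (Dc e) t * Sf (Dc b) t +
        (Sf (Dc e) t * Sf (Dc b) t + Sf e t * Sf (Dc (Dc b)) t)) +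
       μ * ((Sf (Dc e) t * Sf b t + Sf e t * Sf (Dc b) t + Sf (Dc e) (-t) * Sf b (-t) +
        Sf e (-t) * Sf (Dc b) (-t)) * t - (Sf e t * Sf b t - Sf e (-t) * Sf b (-t))) / t ^ 2 := by
    have h1 : deriv (Sf (Lcc μ (Cc e b))) t = Sf (Dc (Lcc μ (Cc e b))) t :=
      ((hA.L μ).hasDerivAt t).deriv
    rw [← h1, hderiv_congr hφeq]
    exact hφd.deriv
  have hψd : HasDerivAt (fun s : ℝ => Sf (Dc b) s + μ * (Sf b s - Sf b (-s)) / s)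
      (Sf (Dc (Dc b)) t + μ * ((Sf (Dc b) t + Sf (Dc b) (-t)) * t -
        (Sf b t - Sf b (-t))) / t ^ 2) t := by
    have H := (hb.D.hasDerivAt t).add
      ((((hb.hasDerivAt t).sub (hasDerivAt_Sf_neg hb t)).const_mul μ).div (hasDerivAt_id t) ht)
    refine H.congr_deriv ?_
    simp only [id, Pi.mul_apply, Pi.sub_apply]
    ring
  have r2 : Sf (Dc (Lcc μ b)) t = Sf (Dc (Dc b)) t +
      μ * ((Sf (Dc b) t + Sf (Dc b) (-t)) * t - (Sf b t - Sf b (-t))) / t ^ 2 := by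
    have h1 : deriv (Sf (Lcc μ b)) t = Sf (Dc (Lcc μ b)) t := ((hb.L μ).hasDerivAt t).deriv
    rw [← h1, hderiv_congr (fun s hs => Sf_Lcc_eq μ hb hs)]
    exact hψd.deriv
  have r3 : Sf (Lcc μ (Lcc μ b)) t = Sf (Dc (Lcc μ b)) t +
      μ * (Sf (Lcc μ b) t - Sf (Lcc μ b) (-t)) / t := Sf_Lcc_eq μ (hb.L μ) ht
  have r4 : Sf (Lcc μ b) t = Sf (Dc b) t + μ * (Sf b t - Sf b (-t)) / t := Sf_Lcc_eq μ hb ht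
  have r5 : Sf (Lcc μ b) (-t) = Sf (Dc b) (-t) + μ * (Sf b (-t) - Sf b t) / (-t) := by
    have h := Sf_Lcc_eq μ hb hmt; rwa [neg_neg] at h
  have r1 : Sf (Lcc μ (Dc b)) t = Sf (Dc (Dc b)) t + μ * (Sf (Dc b) t - Sf (Dc b) (-t)) / t :=
    Sf_Lcc_eq μ hb.D ht
  have hLe : ∀ s : ℝ, Sf (Lcc μ e) s = x * Sf e s := by
    intro s; rw [hedef]; exact Lcc_exp hμ x s
  have s1' : ∀ s : ℝ, s ≠ 0 → Sf (Dc e) s = x * Sf e s - μ * (Sf e s - Sf e (-s)) / s := by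
    intro s hs
    have h := Sf_Lcc_eq μ he hs
    rw [hLe s] at h
    linarith
  have s1 := s1' t ht
  have s2 : Sf (Dc e) (-t) = x * Sf e (-t) - μ * (Sf e (-t) - Sf e t) / (-t) := by
    have h := s1' (-t) hmt; rwa [neg_neg] at h
  have s3 : Sf (Dc (Dc e)) t = x * Sf (Dc e) t -
      μ * ((Sf (Dc e) t + Sf (Dc e) (-t)) * t - (Sf e t - Sf e (-t))) / t ^ 2 := by
    have hH : HasDerivAt (fun s : ℝ => x * Sf e s - μ * (Sf e s - Sf e (-s)) / s)
        (x * Sf (Dc e) t - μ * ((Sf (Dc e) t + Sf (Dc e) (-t)) * t -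
          (Sf e t - Sf e (-t))) / t ^ 2) t := by
      have H := ((he.hasDerivAt t).const_mul x).sub
        ((((he.hasDerivAt t).sub (hasDerivAt_Sf_neg he t)).const_mul μ).div (hasDerivAt_id t) ht)
      refine H.congr_deriv ?_
      simp only [id, Pi.mul_apply, Pi.sub_apply]
      ring
    have h1 : deriv (Sf (Dc e)) t = Sf (Dc (Dc e)) t := ((he.D).hasDerivAt t).deriv
    rw [← h1, hderiv_congr s1']
    exact hH.deriv
  rw [l1, l2, l3, l4, r3, r2, r4, r5, r1, s3, s1, s2]
  field_simp
  ring
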